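/- Let f : ℝ → ℝ be a function with period 1 that is concave on [0, 1] and satisfies f(0) = f(1) = 0. Let t be a real number and let k, ℓ be positive integers such that the k-interval of t encloses the ℓ-interval of t. Then f(kt)/k ≥ f(ℓt)/ℓ. -/

import Mathlib

/-- For a positive integer `k` and a real `t`, the `k`-interval of `t` is
`[⌊kt⌋/k, (⌊kt⌋+1)/k)`; `k` encloses `ℓ` at `t` if the `ℓ`-interval of `t` is a subset of the
`k`-interval of `t`. -/
def Encloses (k ℓ : ℕ) (t : ℝ) : Prop :=
  Set.Ico ((⌊(ℓ : ℝ) * t⌋ : ℝ) / (ℓ : ℝ)) (((⌊(ℓ : ℝ) * t⌋ : ℝ) + 1) / (ℓ : ℝ)) ⊆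
    Set.Ico ((⌊(k : ℝ) * t⌋ : ℝ) / (k : ℝ)) (((⌊(k : ℝ) * t⌋ : ℝ) + 1) / (k : ℝ))

lemma key_concave (f : ℝ → ℝ) (hconc : ConcaveOn ℝ (Set.Icc (0 : ℝ) 1) f)
    (h0 : f 0 = 0) (h1 : f 1 = 0) (x l c : ℝ) (hx0 : 0 ≤ x) (hx1 : x ≤ 1)
    (hl : 0 ≤ l) (hc : 0 ≤ c) (hs : l + c ≤ 1) :
    l * f x ≤ f (l * x + c) := by
  have hl1 : l ≤ 1 := by linarith
  rcases eq_or_lt_of_le hl1 with h | h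
  · have hc0 : c = 0 := by linarith
    simp [h, hc0]
  · have h1l : 0 < 1 - l := by linarith
    set z := c / (1 - l) with hz
    have hz0 : 0 ≤ z := div_nonneg hc h1l.le
    have hz1 : z ≤ 1 := by rw [hz, div_le_one h1l]; linarith
    have hfz : 0 ≤ f z := by
      have := hconc.2 (Set.mem_Icc.2 ⟨le_refl 0, zero_le_one⟩)
        (Set.mem_Icc.2 ⟨zero_le_one, le_refl 1⟩)
        (show (0:ℝ) ≤ 1 - z by linarith) hz0 (show (1 - z) + z = 1 by ring)
      simpa [h0, h1] using this
    have hmain := hconc.2 (Set.mem_Icc.2 ⟨hx0, hx1⟩) (Set.mem_Icc.2 ⟨hz0, hz1⟩)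
      hl (show (0:ℝ) ≤ 1 - l by linarith) (show l + (1 - l) = 1 by ring)
    have heq : l • x + (1 - l) • z = l * x + c := by
      rw [smul_eq_mul, smul_eq_mul, hz]
      field_simp
    rw [heq] at hmain
    have hpos : 0 ≤ (1 - l) * f z := mul_nonneg h1l.le hfz
    simp only [smul_eq_mul] at hmain
    linarith

/-- Let `f : ℝ → ℝ` have period `1`, be concave on `[0,1]`, and satisfy `f(0) = f(1) = 0`.
Let `t` be real and `k, ℓ` positive integers such that the `k`-interval of `t` encloses the
`ℓ`-interval of `t`. Then `f(kt)/k ≥ f(ℓt)/ℓ`. -/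
theorem stmt13 (f : ℝ → ℝ) (hper : ∀ x : ℝ, f (x + 1) = f x)
    (hconc : ConcaveOn ℝ (Set.Icc (0 : ℝ) 1) f) (h0 : f 0 = 0) (h1 : f 1 = 0)
    (t : ℝ) (k ℓ : ℕ) (hk : 0 < k) (hℓ : 0 < ℓ)
    (hencl : Encloses k ℓ t) :
    f ((ℓ : ℝ) * t) / (ℓ : ℝ) ≤ f ((k : ℝ) * t) / (k : ℝ) := by
  have hK : (0 : ℝ) < k := by exact_mod_cast hk
  have hL : (0 : ℝ) < ℓ := by exact_mod_cast hℓ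
  have hP : Function.Periodic f 1 := hper
  set a : ℝ := (⌊(ℓ : ℝ) * t⌋ : ℝ) with ha
  set b : ℝ := (⌊(k : ℝ) * t⌋ : ℝ) with hb
  have hlt : a / ℓ < (a + 1) / ℓ := by
    apply div_lt_div_of_pos_right _ hL
    linarith
  have hmem : a / ℓ ∈ Set.Ico (a / ℓ) ((a + 1) / ℓ) := ⟨le_refl _, hlt⟩
  have hleft := (hencl hmem).1
  have hba : ℓ * b ≤ k * a := by
    rw [div_le_div_iff₀ hK hL] at hleft; linarith
  have hright : (a + 1) / ℓ ≤ (b + 1) / k := by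
    by_contra hcon
    push_neg at hcon
    have hq : max (a / ℓ) ((b + 1) / k) ∈ Set.Ico (a / ℓ) ((a + 1) / ℓ) :=
      ⟨le_max_left _ _, max_lt hlt hcon⟩
    exact absurd (hencl hq).2 (not_lt.2 (le_max_right _ _))
  have hkl : k * (a + 1) ≤ ℓ * (b + 1) := by
    rw [div_le_div_iff₀ hL hK] at hright; linarith
  set x : ℝ := (ℓ : ℝ) * t - a with hxdef
  set y : ℝ := (k : ℝ) * t - b with hydef
  have hx0 : 0 ≤ x := by
    have := Int.floor_le ((ℓ : ℝ) * t)
    simp only [hxdef, ha]; linarith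
  have hx1 : x ≤ 1 := by
    have := Int.lt_floor_add_one ((ℓ : ℝ) * t)
    simp only [hxdef, ha]; linarith
  have hfy : f ((k : ℝ) * t) = f y := by
    have := hP.sub_int_mul_eq (x := (k : ℝ) * t) ⌊(k : ℝ) * t⌋
    simp only [mul_one] at this
    rw [hydef, hb, this]
  have hfx : f ((ℓ : ℝ) * t) = f x := by
    have := hP.sub_int_mul_eq (x := (ℓ : ℝ) * t) ⌊(ℓ : ℝ) * t⌋
    simp only [mul_one] at this
    rw [hxdef, ha, this]
  have hkey := key_concave f hconc h0 h1 x ((k : ℝ) / ℓ) ((k * a - ℓ * b) / ℓ) hx0 hx1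
    (by positivity) (div_nonneg (by linarith) hL.le)
    (by rw [← add_div, div_le_one hL]; linarith)
  have hcomb : (k : ℝ) / ℓ * x + (k * a - ℓ * b) / ℓ = y := by
    rw [hxdef, hydef]; field_simp; ring
  rw [hcomb] at hkey
  rw [hfx, hfy, div_le_div_iff₀ hL hK]
  have hmul : (k : ℝ) / ℓ * f x * ℓ ≤ f y * ℓ := mul_le_mul_of_nonneg_right hkey hL.le
  calc f x * k = (k : ℝ) / ℓ * f x * ℓ := by field_simp
    _ ≤ f y * ℓ := hmul
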